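/- Under assumption (H), given a principal eigen-triple (λ⋆, η⋆, h⋆), for every initial probability measure μ and all integers 0 ≤ p ≤ n one has sup_{x∈X} |h_{p,n}(x) − h⋆(x)| ≤ ρ^{(n−p)∧p} · C_h, where ρ := 1 − ε⁻/ε⁺ and C_h := 2(ε⁺/ε⁻)²·(1 + (ε⁺/ε⁻) + 2(ε⁺/ε⁻)³); the bound does not depend on μ. -/

import Mathlib

open MeasureTheory ProbabilityTheory Filter
open scoped ENNReal


/-- The operator `Q(φ)(x) = G(x) ∫ φ(y) M(x,dy)` associated with the kernel
`Q(x,dy) := G(x) M(x,dy)`. -/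
noncomputable def Qop {X : Type*} [MeasurableSpace X] (G : X → ℝ) (M : Kernel X X)
    (φ : X → ℝ) (x : X) : ℝ :=
  G x * ∫ y, φ y ∂(M x)

/-- The `n`-fold iterate `Q^{(n)}` of the operator `Q`, `Q^{(0)} = Id`. -/
noncomputable def Qiter {X : Type*} [MeasurableSpace X] (G : X → ℝ) (M : Kernel X X) :
    ℕ → (X → ℝ) → X → ℝ
  | 0 => fun φ => φ
  | n + 1 => fun φ => Qop G M (Qiter G M n φ)

/-- `η_n(φ)` where `η_0 := μ` and `η_n := μQ^{(n)} / μQ^{(n)}(1)`. -/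
noncomputable def etaInt {X : Type*} [MeasurableSpace X] (G : X → ℝ) (M : Kernel X X)
    (μ : Measure X) (n : ℕ) (φ : X → ℝ) : ℝ :=
  (∫ x, Qiter G M n φ x ∂μ) / ∫ x, Qiter G M n (fun _ => (1 : ℝ)) x ∂μ

/-- `h_{p,n}(x) := Q^{(n−p)}(1)(x) / η_p Q^{(n−p)}(1)` (which equals `1` when `p = n`). -/
noncomputable def hpn {X : Type*} [MeasurableSpace X] (G : X → ℝ) (M : Kernel X X)
    (μ : Measure X) (p n : ℕ) (x : X) : ℝ :=
  Qiter G M (n - p) (fun _ => (1 : ℝ)) x /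
    etaInt G M μ p (Qiter G M (n - p) (fun _ => (1 : ℝ)))

namespace Stmt10Aux

open scoped NNReal

variable {X : Type*} [MeasurableSpace X]

/-- Integral operator with kernel density `κ` w.r.t. `ν`. -/
noncomputable def Iop (ν : Measure X) (κ : X → X → ℝ) (φ : X → ℝ) (x : X) : ℝ :=
  ∫ y, κ x y * φ y ∂ν

/-- Iterates of `Iop`. -/
noncomputable def Iit (ν : Measure X) (κ : X → X → ℝ) : ℕ → (X → ℝ) → X → ℝ
  | 0 => fun φ => φ
  | n + 1 => fun φ => Iop ν κ (Iit ν κ n φ)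

lemma integrable_of_bdd {α : Type*} [MeasurableSpace α] {C : ℝ} {φ : α → ℝ}
    (m : Measure α) [IsFiniteMeasure m]
    (hφ : Measurable φ) (hb : ∀ x, |φ x| ≤ C) : Integrable φ m :=
  Integrable.mono' (integrable_const C) hφ.aestronglyMeasurable (ae_of_all _ hb)

variable {ν : Measure X} [IsProbabilityMeasure ν] {κ : X → X → ℝ}

lemma kernel_meas_right (hκ : Measurable (Function.uncurry κ)) (x : X) :
    Measurable (κ x) := hκ.comp (measurable_prodMk_left)

lemma Iop_meas {φ : X → ℝ} (hκ : Measurable (Function.uncurry κ)) (hφ : Measurable φ) :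
    Measurable (Iop ν κ φ) := by
  have : StronglyMeasurable (Function.uncurry (fun x y => κ x y * φ y)) := by
    apply Measurable.stronglyMeasurable
    exact hκ.mul (hφ.comp measurable_snd)
  exact (StronglyMeasurable.integral_prod_right (f := fun x y => κ x y * φ y) this).measurable

lemma Iop_integrand_integrable {φ : X → ℝ} {Cκ C : ℝ}
    (hκ : Measurable (Function.uncurry κ)) (hκb : ∀ x y, |κ x y| ≤ Cκ)
    (hφ : Measurable φ) (hb : ∀ x, |φ x| ≤ C) (hC : 0 ≤ C) (x : X) :
    Integrable (fun y => κ x y * φ y) ν := by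
  apply integrable_of_bdd (C := Cκ * C) ν ((kernel_meas_right hκ x).mul hφ)
  intro y
  rw [Pi.mul_apply, abs_mul]
  exact mul_le_mul (hκb x y) (hb y) (abs_nonneg _) ((abs_nonneg _).trans (hκb x y))

lemma Iop_bounds {φ : X → ℝ} {Cκ a b : ℝ}
    (hκ : Measurable (Function.uncurry κ)) (hκ0 : ∀ x y, 0 ≤ κ x y) (hκb : ∀ x y, κ x y ≤ Cκ)
    (hMark : ∀ x, ∫ y, κ x y ∂ν = 1)
    (hφ : Measurable φ) (ha : ∀ x, a ≤ φ x) (hb : ∀ x, φ x ≤ b) (x : X) :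
    a ≤ Iop ν κ φ x ∧ Iop ν κ φ x ≤ b := by
  have hκb' : ∀ x y, |κ x y| ≤ Cκ := fun x y => by
    rw [abs_of_nonneg (hκ0 x y)]; exact hκb x y
  have hbC : ∀ y, |φ y| ≤ |a| + |b| := fun y => by
    rcases abs_cases (φ y) with ⟨h, _⟩ | ⟨h, _⟩
    · calc |φ y| = φ y := h
        _ ≤ b := hb y
        _ ≤ |b| := le_abs_self b
        _ ≤ |a| + |b| := le_add_of_nonneg_left (abs_nonneg a)
    · calc |φ y| = -φ y := h
        _ ≤ -a := by linarith [ha y]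
        _ ≤ |a| := neg_le_abs a
        _ ≤ |a| + |b| := le_add_of_nonneg_right (abs_nonneg b)
  have hint : Integrable (fun y => κ x y * φ y) ν :=
    Iop_integrand_integrable hκ hκb' hφ hbC (by positivity) x
  have hka : Integrable (fun y => κ x y * a) ν := by
    apply integrable_of_bdd (C := Cκ * |a|) ν ((kernel_meas_right hκ x).mul measurable_const)
    intro y; rw [Pi.mul_apply, abs_mul]
    exact mul_le_mul_of_nonneg_right (hκb' x y) (abs_nonneg a)
  have hkb : Integrable (fun y => κ x y * b) ν := by
    apply integrable_of_bdd (C := Cκ * |b|) ν ((kernel_meas_right hκ x).mul measurable_const)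
    intro y; rw [Pi.mul_apply, abs_mul]
    exact mul_le_mul_of_nonneg_right (hκb' x y) (abs_nonneg b)
  constructor
  · have : ∫ y, κ x y * a ∂ν ≤ Iop ν κ φ x := by
      apply integral_mono hka hint
      intro y
      exact mul_le_mul_of_nonneg_left (ha y) (hκ0 x y)
    rwa [integral_mul_const, hMark x, one_mul] at this
  · have : Iop ν κ φ x ≤ ∫ y, κ x y * b ∂ν := by
      apply integral_mono hint hkb
      intro y
      exact mul_le_mul_of_nonneg_left (hb y) (hκ0 x y)
    rwa [integral_mul_const, hMark x, one_mul] at this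

set_option linter.unusedSectionVars false
set_option linter.unusedVariables false

lemma abs_le_of_bounds {φ : X → ℝ} {a b : ℝ} (ha : ∀ x, a ≤ φ x) (hb : ∀ x, φ x ≤ b)
    (x : X) : |φ x| ≤ |a| + |b| := by
  rcases abs_cases (φ x) with ⟨h, _⟩ | ⟨h, _⟩
  · have := (hb x).trans (le_abs_self b); linarith [abs_nonneg a]
  · have : -φ x ≤ -a := by linarith [ha x]
    have := this.trans (neg_le_abs a); linarith [abs_nonneg b]

/-- One-step Doeblin contraction of pairwise oscillation. -/
lemma Iop_contract {φ π : X → ℝ} {Cκ c0 a b Δ : ℝ}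
    (hκ : Measurable (Function.uncurry κ)) (hκ0 : ∀ x y, 0 ≤ κ x y) (hκb : ∀ x y, κ x y ≤ Cκ)
    (hMark : ∀ x, ∫ y, κ x y ∂ν = 1)
    (hπ0 : ∀ y, 0 ≤ π y) (hπ1 : ∫ y, π y ∂ν = 1) (hπint : Integrable π ν)
    (hmin : ∀ x y, c0 * π y ≤ κ x y)
    (hφ : Measurable φ) (ha : ∀ x, a ≤ φ x) (hb : ∀ x, φ x ≤ b)
    (hosc : ∀ x x', φ x - φ x' ≤ Δ) (x x' : X) :
    Iop ν κ φ x - Iop ν κ φ x' ≤ (1 - c0) * Δ := by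
  haveI : Nonempty X := ⟨x⟩
  set s := sInf (Set.range φ) with hs
  have hbdd : BddBelow (Set.range φ) := ⟨a, by rintro _ ⟨z, rfl⟩; exact ha z⟩
  have h1 : ∀ y, s ≤ φ y := fun y => csInf_le hbdd ⟨y, rfl⟩
  have h2 : ∀ y, φ y ≤ s + Δ := by
    intro y
    have : φ y - Δ ≤ s := le_csInf (Set.range_nonempty φ)
      (by rintro _ ⟨z, rfl⟩; linarith [hosc y z])
    linarith
  set m : ℝ := s + Δ / 2 with hm
  have habs : ∀ y, |φ y - m| ≤ Δ / 2 := fun y =>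
    abs_le.mpr ⟨by simp only [hm]; linarith [h1 y], by simp only [hm]; linarith [h2 y]⟩
  have hκabs : ∀ z y, |κ z y| ≤ Cκ := fun z y => by
    rw [abs_of_nonneg (hκ0 z y)]; exact hκb z y
  have hCκ0 : 0 ≤ Cκ := le_trans (abs_nonneg _) (hκabs x x)
  have hφabs : ∀ y, |φ y| ≤ |a| + |b| := abs_le_of_bounds ha hb
  have intκφ : ∀ z, Integrable (fun y => κ z y * φ y) ν := by
    intro z
    apply integrable_of_bdd (C := Cκ * (|a| + |b|)) ν ((kernel_meas_right hκ z).mul hφ)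
    intro y; rw [Pi.mul_apply, abs_mul]
    exact mul_le_mul (hκabs z y) (hφabs y) (abs_nonneg _) ((abs_nonneg _).trans (hκabs z y))
  have intκ : ∀ z, Integrable (κ z) ν :=
    fun z => integrable_of_bdd (C := Cκ) ν (kernel_meas_right hκ z) (hκabs z)
  have key : ∫ y, (κ x y - κ x' y) * (φ y - m) ∂ν = Iop ν κ φ x - Iop ν κ φ x' := by
    have e : (fun y => (κ x y - κ x' y) * (φ y - m)) =
        fun y => (κ x y * φ y - κ x' y * φ y) - (m * κ x y - m * κ x' y) := by
      funext y; ring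
    have i1 : ∫ y, ((κ x y * φ y - κ x' y * φ y) - (m * κ x y - m * κ x' y)) ∂ν
        = (∫ y, (κ x y * φ y - κ x' y * φ y) ∂ν) - ∫ y, (m * κ x y - m * κ x' y) ∂ν := by
      apply integral_sub
      · exact (intκφ x).sub (intκφ x')
      · exact ((intκ x).const_mul m).sub ((intκ x').const_mul m)
    have i2 : ∫ y, (κ x y * φ y - κ x' y * φ y) ∂ν
        = (∫ y, κ x y * φ y ∂ν) - ∫ y, κ x' y * φ y ∂ν :=
      integral_sub (intκφ x) (intκφ x')
    have i3 : ∫ y, (m * κ x y - m * κ x' y) ∂ν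
        = (∫ y, m * κ x y ∂ν) - ∫ y, m * κ x' y ∂ν :=
      integral_sub ((intκ x).const_mul m) ((intκ x').const_mul m)
    have i4 : ∫ y, m * κ x y ∂ν = m := by rw [integral_const_mul, hMark x, mul_one]
    have i5 : ∫ y, m * κ x' y ∂ν = m := by rw [integral_const_mul, hMark x', mul_one]
    rw [e, i1, i2, i3, i4, i5]
    simp [Iop]
  have int1 : Integrable (fun y => (κ x y - κ x' y) * (φ y - m)) ν := by
    apply integrable_of_bdd (C := (Cκ + Cκ) * (Δ / 2)) ν
      (((kernel_meas_right hκ x).sub (kernel_meas_right hκ x')).mul (hφ.sub measurable_const))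
    intro y; rw [Pi.mul_apply, abs_mul]
    refine mul_le_mul ?_ (habs y) (abs_nonneg _) (by linarith)
    calc |κ x y - κ x' y| ≤ |κ x y| + |κ x' y| := abs_sub _ _
      _ ≤ Cκ + Cκ := add_le_add (hκabs x y) (hκabs x' y)
  have int2 : Integrable
      (fun y => ((κ x y - c0 * π y) + (κ x' y - c0 * π y)) * (Δ / 2)) ν :=
    ((((intκ x).sub (hπint.const_mul c0)).add
      ((intκ x').sub (hπint.const_mul c0))).mul_const (Δ / 2))
  have step1 : ∫ y, (κ x y - κ x' y) * (φ y - m) ∂ν ≤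
      ∫ y, ((κ x y - c0 * π y) + (κ x' y - c0 * π y)) * (Δ / 2) ∂ν := by
    apply integral_mono int1 int2
    intro y
    calc (κ x y - κ x' y) * (φ y - m) ≤ |(κ x y - κ x' y) * (φ y - m)| := le_abs_self _
      _ = |κ x y - κ x' y| * |φ y - m| := abs_mul _ _
      _ ≤ ((κ x y - c0 * π y) + (κ x' y - c0 * π y)) * (Δ / 2) := by
          refine mul_le_mul ?_ (habs y) (abs_nonneg _) ?_
          · refine abs_le.mpr ⟨?_, ?_⟩
            · linarith [hmin x y, hmin x' y]
            · linarith [hmin x y, hmin x' y]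
          · linarith [hmin x y, hmin x' y, hκ0 x y, hκ0 x' y]
  have step2 : ∫ y, ((κ x y - c0 * π y) + (κ x' y - c0 * π y)) * (Δ / 2) ∂ν
      = (1 - c0) * Δ := by
    have j0 : ∫ y, ((κ x y - c0 * π y) + (κ x' y - c0 * π y)) * (Δ / 2) ∂ν
        = (∫ y, ((κ x y - c0 * π y) + (κ x' y - c0 * π y)) ∂ν) * (Δ / 2) :=
      integral_mul_const _ _
    have j1 : ∫ y, ((κ x y - c0 * π y) + (κ x' y - c0 * π y)) ∂ν
        = (∫ y, (κ x y - c0 * π y) ∂ν) + ∫ y, (κ x' y - c0 * π y) ∂ν := by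
      apply integral_add
      · exact (intκ x).sub (hπint.const_mul c0)
      · exact (intκ x').sub (hπint.const_mul c0)
    have j2 : ∀ z : X, ∫ y, (κ z y - c0 * π y) ∂ν = 1 - c0 := by
      intro z
      rw [integral_sub (intκ z) (hπint.const_mul c0), integral_const_mul, hMark z, hπ1, mul_one]
    rw [j0, j1, j2 x, j2 x']
    ring
  linarith [step1.trans_eq step2, key.le, key.ge]


/-- Iterates preserve measurability and bounds, and contract pairwise oscillation. -/
lemma Iit_props {φ π : X → ℝ} {Cκ c0 a b : ℝ}
    (hκ : Measurable (Function.uncurry κ)) (hκ0 : ∀ x y, 0 ≤ κ x y) (hκb : ∀ x y, κ x y ≤ Cκ)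
    (hMark : ∀ x, ∫ y, κ x y ∂ν = 1)
    (hπ0 : ∀ y, 0 ≤ π y) (hπ1 : ∫ y, π y ∂ν = 1) (hπint : Integrable π ν)
    (hmin : ∀ x y, c0 * π y ≤ κ x y)
    (hφ : Measurable φ) (ha : ∀ x, a ≤ φ x) (hb : ∀ x, φ x ≤ b) (n : ℕ) :
    Measurable (Iit ν κ n φ) ∧ (∀ x, a ≤ Iit ν κ n φ x ∧ Iit ν κ n φ x ≤ b) ∧
      (∀ x x', Iit ν κ n φ x - Iit ν κ n φ x' ≤ (1 - c0) ^ n * (b - a)) := by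
  induction n with
  | zero =>
    refine ⟨hφ, fun x => ⟨ha x, hb x⟩, fun x x' => ?_⟩
    rw [pow_zero, one_mul]
    show φ x - φ x' ≤ b - a
    linarith [ha x', hb x]
  | succ n ih =>
    obtain ⟨hm, hbd, hosc⟩ := ih
    have hstep : Iit ν κ (n + 1) φ = Iop ν κ (Iit ν κ n φ) := rfl
    refine ⟨?_, ?_, ?_⟩
    · rw [hstep]; exact Iop_meas hκ hm
    · intro x
      rw [hstep]
      exact Iop_bounds hκ hκ0 hκb hMark hm (fun z => (hbd z).1) (fun z => (hbd z).2) x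
    · intro x x'
      rw [hstep]
      have := Iop_contract hκ hκ0 hκb hMark hπ0 hπ1 hπint hmin hm
        (fun z => (hbd z).1) (fun z => (hbd z).2) hosc x x'
      calc Iop ν κ (Iit ν κ n φ) x - Iop ν κ (Iit ν κ n φ) x'
          ≤ (1 - c0) * ((1 - c0) ^ n * (b - a)) := this
        _ = (1 - c0) ^ (n + 1) * (b - a) := by ring

/-- Iterates (no Markov property needed): measurability and absolute bounds. -/
lemma Iit_meas_bdd {φ : X → ℝ} {Cκ C : ℝ}
    (hκ : Measurable (Function.uncurry κ)) (hκ0 : ∀ x y, 0 ≤ κ x y) (hκb : ∀ x y, κ x y ≤ Cκ)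
    (hCκ0 : 0 ≤ Cκ) (hC0 : 0 ≤ C)
    (hφ : Measurable φ) (hb : ∀ x, |φ x| ≤ C) (n : ℕ) :
    Measurable (Iit ν κ n φ) ∧ ∀ x, |Iit ν κ n φ x| ≤ Cκ ^ n * C := by
  induction n with
  | zero => exact ⟨hφ, fun x => by simpa [Iit] using hb x⟩
  | succ n ih =>
    obtain ⟨hm, hbd⟩ := ih
    refine ⟨Iop_meas hκ hm, fun x => ?_⟩
    have hκabs : ∀ z y, |κ z y| ≤ Cκ := fun z y => by
      rw [abs_of_nonneg (hκ0 z y)]; exact hκb z y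
    have hpt : ∀ y, ‖κ x y * Iit ν κ n φ y‖ ≤ Cκ ^ (n + 1) * C := by
      intro y
      rw [Real.norm_eq_abs, abs_mul]
      calc |κ x y| * |Iit ν κ n φ y| ≤ Cκ * (Cκ ^ n * C) :=
            mul_le_mul (hκabs x y) (hbd y) (abs_nonneg _) hCκ0
        _ = Cκ ^ (n + 1) * C := by ring
    have hnorm : ‖∫ y, κ x y * Iit ν κ n φ y ∂ν‖
        ≤ (Cκ ^ (n + 1) * C) * (ν Set.univ).toReal :=
      norm_integral_le_of_norm_le_const (ae_of_all ν hpt)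
    have he : Iit ν κ (n + 1) φ x = ∫ y, κ x y * Iit ν κ n φ y ∂ν := rfl
    rw [he, ← Real.norm_eq_abs]
    calc ‖∫ y, κ x y * Iit ν κ n φ y ∂ν‖
        ≤ (Cκ ^ (n + 1) * C) * (ν Set.univ).toReal := hnorm
      _ = Cκ ^ (n + 1) * C := by simp
  
/-- Monotonicity of iterates for a nonnegative kernel. -/
lemma Iit_mono {φ ψ : X → ℝ} {Cκ C : ℝ}
    (hκ : Measurable (Function.uncurry κ)) (hκ0 : ∀ x y, 0 ≤ κ x y) (hκb : ∀ x y, κ x y ≤ Cκ)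
    (hCκ0 : 0 ≤ Cκ) (hC0 : 0 ≤ C)
    (hφ : Measurable φ) (hbφ : ∀ x, |φ x| ≤ C)
    (hψ : Measurable ψ) (hbψ : ∀ x, |ψ x| ≤ C)
    (h : ∀ x, φ x ≤ ψ x) (n : ℕ) :
    ∀ x, Iit ν κ n φ x ≤ Iit ν κ n ψ x := by
  induction n with
  | zero => exact h
  | succ n ih =>
    intro x
    obtain ⟨hmφ, hbφ'⟩ := Iit_meas_bdd (ν := ν) hκ hκ0 hκb hCκ0 hC0 hφ hbφ n
    obtain ⟨hmψ, hbψ'⟩ := Iit_meas_bdd (ν := ν) hκ hκ0 hκb hCκ0 hC0 hψ hbψ n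
    have hκabs : ∀ z y, |κ z y| ≤ Cκ := fun z y => by
      rw [abs_of_nonneg (hκ0 z y)]; exact hκb z y
    have intφ : Integrable (fun y => κ x y * Iit ν κ n φ y) ν := by
      apply integrable_of_bdd (C := Cκ * (Cκ ^ n * C)) ν ((kernel_meas_right hκ x).mul hmφ)
      intro y; rw [Pi.mul_apply, abs_mul]
      exact mul_le_mul (hκabs x y) (hbφ' y) (abs_nonneg _) hCκ0
    have intψ : Integrable (fun y => κ x y * Iit ν κ n ψ y) ν := by
      apply integrable_of_bdd (C := Cκ * (Cκ ^ n * C)) ν ((kernel_meas_right hκ x).mul hmψ)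
      intro y; rw [Pi.mul_apply, abs_mul]
      exact mul_le_mul (hκabs x y) (hbψ' y) (abs_nonneg _) hCκ0
    exact integral_mono intφ intψ fun y => mul_le_mul_of_nonneg_left (ih y) (hκ0 x y)

/-- Iterates commute with scalar multiplication. -/
lemma Iit_const_mul (c : ℝ) (φ : X → ℝ) (n : ℕ) :
    ∀ x, Iit ν κ n (fun y => c * φ y) x = c * Iit ν κ n φ x := by
  induction n with
  | zero => intro x; rfl
  | succ n ih =>
    intro x
    show Iop ν κ (Iit ν κ n fun y => c * φ y) x = c * Iop ν κ (Iit ν κ n φ) x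
    have : (Iit ν κ n fun y => c * φ y) = fun y => c * Iit ν κ n φ y := funext ih
    rw [this]
    show ∫ y, κ x y * (c * Iit ν κ n φ y) ∂ν = c * ∫ y, κ x y * Iit ν κ n φ y ∂ν
    rw [← integral_const_mul]
    congr 1; funext y; ring

/-- Additivity of iterates in the exponent. -/
lemma Iit_add (m n : ℕ) (φ : X → ℝ) :
    Iit ν κ (m + n) φ = Iit ν κ m (Iit ν κ n φ) := by
  induction m with
  | zero => rw [Nat.zero_add]; rfl
  | succ m ih =>
    have h : m + 1 + n = (m + n) + 1 := by omega
    rw [h]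
    show Iop ν κ (Iit ν κ (m + n) φ) = Iit ν κ (m + 1) (Iit ν κ n φ)
    rw [ih]; rfl


section Repr

variable {G : X → ℝ} {M : Kernel X X} {q : X → X → ℝ}

/-- Density representation of the operator `Qop`. -/
lemma Qop_repr (hG0 : ∀ x, 0 ≤ G x)
    (hq : Measurable (Function.uncurry q)) (hq0 : ∀ x y, 0 ≤ q x y)
    (hH : ∀ x (A : Set X), MeasurableSet A →
      ENNReal.ofReal (G x) * M x A = ∫⁻ y in A, ENNReal.ofReal (q x y) ∂ν)
    (φ : X → ℝ) (x : X) : Qop G M φ x = ∫ y, q x y * φ y ∂ν := by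
  have hmeas : Measurable fun y => (q x y).toNNReal := (kernel_meas_right hq x).real_toNNReal
  have hmeq : (ENNReal.ofReal (G x)) • (M x)
      = ν.withDensity (fun y => ((q x y).toNNReal : ℝ≥0∞)) := by
    ext A hA
    rw [Measure.smul_apply, smul_eq_mul, hH x A hA, withDensity_apply _ hA]
    rfl
  have h1 : ∫ y, φ y ∂((ENNReal.ofReal (G x)) • M x) = G x * ∫ y, φ y ∂(M x) := by
    rw [integral_smul_measure, ENNReal.toReal_ofReal (hG0 x), smul_eq_mul]
  have h2 : ∫ y, φ y ∂(ν.withDensity (fun y => ((q x y).toNNReal : ℝ≥0∞)))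
      = ∫ y, (q x y).toNNReal • φ y ∂ν := integral_withDensity_eq_integral_smul hmeas φ
  have h3 : ∫ y, (q x y).toNNReal • φ y ∂ν = ∫ y, q x y * φ y ∂ν := by
    congr 1; funext y
    rw [NNReal.smul_def, Real.coe_toNNReal _ (hq0 x y), smul_eq_mul]
  show G x * ∫ y, φ y ∂(M x) = _
  rw [← h1, hmeq, h2, h3]

/-- `Qiter` coincides with the abstract iterates of the integral operator. -/
lemma Qiter_eq_Iit (hG0 : ∀ x, 0 ≤ G x)
    (hq : Measurable (Function.uncurry q)) (hq0 : ∀ x y, 0 ≤ q x y)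
    (hH : ∀ x (A : Set X), MeasurableSet A →
      ENNReal.ofReal (G x) * M x A = ∫⁻ y in A, ENNReal.ofReal (q x y) ∂ν)
    (n : ℕ) (φ : X → ℝ) : Qiter G M n φ = Iit ν q n φ := by
  induction n with
  | zero => rfl
  | succ n ih =>
    show Qop G M (Qiter G M n φ) = Iop ν q (Iit ν q n φ)
    rw [ih]
    funext x
    exact Qop_repr hG0 hq hq0 hH _ x

/-- The eigenmeasure identity at the level of bounded measurable functions. -/
lemma eig_integral {ηs : Measure X} [IsProbabilityMeasure ηs] {lam εm εp C : ℝ}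
    {φ : X → ℝ}
    (hq : Measurable (Function.uncurry q)) (hq_lb : ∀ x y, εm ≤ q x y)
    (hq_ub : ∀ x y, q x y ≤ εp) (hεm0 : 0 ≤ εm)
    (hkey : ∀ A : Set X, MeasurableSet A →
      ∫⁻ y in A, (∫⁻ x, ENNReal.ofReal (q x y) ∂ηs) ∂ν = ENNReal.ofReal lam * ηs A)
    (hlam0 : 0 ≤ lam) (hC0 : 0 ≤ C)
    (hφ : Measurable φ) (hbφ : ∀ x, |φ x| ≤ C) :
    ∫ x, (∫ y, q x y * φ y ∂ν) ∂ηs = lam * ∫ x, φ x ∂ηs := by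
  set Qb : X → ℝ≥0∞ := fun y => ∫⁻ x, ENNReal.ofReal (q x y) ∂ηs with hQb
  have hq0 : ∀ x y, 0 ≤ q x y := fun x y => hεm0.trans (hq_lb x y)
  have hQb_meas : Measurable Qb := by
    apply Measurable.lintegral_prod_left (f := fun x y => ENNReal.ofReal (q x y))
    exact hq.ennreal_ofReal
  have hQb_fin : ∀ y, Qb y ≠ ⊤ := by
    intro y
    have : Qb y ≤ ENNReal.ofReal εp := by
      rw [hQb]
      calc ∫⁻ x, ENNReal.ofReal (q x y) ∂ηs ≤ ∫⁻ _, ENNReal.ofReal εp ∂ηs :=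
            lintegral_mono fun x => ENNReal.ofReal_le_ofReal (hq_ub x y)
        _ = ENNReal.ofReal εp := by simp
    exact (this.trans_lt ENNReal.ofReal_lt_top).ne
  set Qb' : X → ℝ≥0 := fun y => (Qb y).toNNReal with hQb'
  have hQb'_meas : Measurable Qb' := hQb_meas.ennreal_toNNReal
  have hwd : ν.withDensity (fun y => (Qb' y : ℝ≥0∞)) = ENNReal.ofReal lam • ηs := by
    ext A hA
    rw [withDensity_apply _ hA, Measure.smul_apply, smul_eq_mul, ← hkey A hA]
    exact lintegral_congr fun y => by rw [hQb', ENNReal.coe_toNNReal (hQb_fin y)]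
  have E3 : ∫ y, (Qb' y : ℝ) * φ y ∂ν = lam * ∫ x, φ x ∂ηs := by
    have := integral_withDensity_eq_integral_smul hQb'_meas φ (μ := ν)
    rw [hwd, integral_smul_measure, ENNReal.toReal_ofReal hlam0, smul_eq_mul] at this
    simp only [NNReal.smul_def, smul_eq_mul] at this
    exact this.symm
  have E4 : ∀ y, (Qb' y : ℝ) = ∫ x, q x y ∂ηs := by
    intro y
    have hmy : Measurable fun x => q x y := hq.comp (measurable_prodMk_right)
    rw [integral_eq_lintegral_of_nonneg_ae (ae_of_all _ fun x => hq0 x y)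
      hmy.aestronglyMeasurable]
    rfl
  have hqabs : ∀ x y, |q x y| ≤ |εm| + |εp| := fun x y =>
    abs_le_of_bounds (φ := fun _ : X => q x y) (fun _ => hq_lb x y) (fun _ => hq_ub x y) x
  have hint : Integrable (Function.uncurry fun x y => q x y * φ y) (ηs.prod ν) := by
    apply integrable_of_bdd (C := (|εm| + |εp|) * C) (ηs.prod ν)
    · exact hq.mul (hφ.comp measurable_snd)
    · rintro ⟨x, y⟩
      rw [Function.uncurry_apply_pair, abs_mul]
      exact mul_le_mul (hqabs x y) (hbφ y) (abs_nonneg _) (by positivity)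
  calc ∫ x, (∫ y, q x y * φ y ∂ν) ∂ηs
      = ∫ y, (∫ x, q x y * φ y ∂ηs) ∂ν := integral_integral_swap hint
    _ = ∫ y, (Qb' y : ℝ) * φ y ∂ν := by
        refine integral_congr_ae (ae_of_all _ fun y => ?_)
        show ∫ x, q x y * φ y ∂ηs = (Qb' y : ℝ) * φ y
        rw [integral_mul_const, E4 y]
    _ = lam * ∫ x, φ x ∂ηs := E3

/-- Converting the eigenmeasure hypothesis to the dual-density form. -/
lemma hkey_of {G : X → ℝ} {M : Kernel X X} {ηs : Measure X} [IsProbabilityMeasure ηs] {lam : ℝ}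
    (hq : Measurable (Function.uncurry q))
    (hH : ∀ x (A : Set X), MeasurableSet A →
      ENNReal.ofReal (G x) * M x A = ∫⁻ y in A, ENNReal.ofReal (q x y) ∂ν)
    (h_meas_eq : ∀ A : Set X, MeasurableSet A →
      ∫⁻ x, ENNReal.ofReal (G x) * M x A ∂ηs = ENNReal.ofReal lam * ηs A)
    (A : Set X) (hA : MeasurableSet A) :
    ∫⁻ y in A, (∫⁻ x, ENNReal.ofReal (q x y) ∂ηs) ∂ν = ENNReal.ofReal lam * ηs A := by
  rw [← h_meas_eq A hA]
  have h1 : ∫⁻ x, ENNReal.ofReal (G x) * M x A ∂ηs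
      = ∫⁻ x, (∫⁻ y in A, ENNReal.ofReal (q x y) ∂ν) ∂ηs :=
    lintegral_congr fun x => hH x A hA
  rw [h1]
  exact (lintegral_lintegral_swap
    (f := fun x y => ENNReal.ofReal (q x y)) hq.ennreal_ofReal.aemeasurable).symm

end Repr

end Stmt10Aux

set_option maxHeartbeats 2000000 in
theorem stmt10 {X : Type*} [MeasurableSpace X]
    (G : X → ℝ) (M : Kernel X X) [IsMarkovKernel M]
    (ν : Measure X) [IsProbabilityMeasure ν]
    (q : X → X → ℝ) (εm εp : ℝ)
    (hq_meas : Measurable fun p : X × X => q p.1 p.2)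
    (hεm_pos : 0 < εm) (hεle : εm ≤ εp)
    (hq_lb : ∀ x y, εm ≤ q x y) (hq_ub : ∀ x y, q x y ≤ εp)
    (hG_meas : Measurable G) (hG_pos : ∀ x, 0 < G x) (hG_bdd : ∃ c, ∀ x, G x ≤ c)
    (hH : ∀ x (A : Set X), MeasurableSet A →
      ENNReal.ofReal (G x) * M x A = ∫⁻ y in A, ENNReal.ofReal (q x y) ∂ν)
    (lam : ℝ) (hlam_pos : 0 < lam)
    (ηs : Measure X) [IsProbabilityMeasure ηs]
    (hs : X → ℝ) (hhs_meas : Measurable hs)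
    (hhs_lb : ∀ x, εm / εp ≤ hs x) (hhs_ub : ∀ x, hs x ≤ εp / εm)
    (h_meas_eq : ∀ A : Set X, MeasurableSet A →
      ∫⁻ x, ENNReal.ofReal (G x) * M x A ∂ηs = ENNReal.ofReal lam * ηs A)
    (h_fun_eq : ∀ x, Qop G M hs x = lam * hs x)
    (h_norm : ∫ x, hs x ∂ηs = 1)
    (μ : Measure X) [IsProbabilityMeasure μ] :
    ∀ p n : ℕ, p ≤ n → ∀ x : X,
      |hpn G M μ p n x - hs x|
        ≤ (1 - εm / εp) ^ (min (n - p) p) *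
          (2 * (εp / εm) ^ 2 * (1 + εp / εm + 2 * (εp / εm) ^ 3)) := by
  classical
  intro p n hple x0
  haveI : Nonempty X := ⟨x0⟩
  open Stmt10Aux in
  -- Basic constants
  set r : ℝ := εp / εm with hr
  set c : ℝ := εm / εp with hc
  have hεp0 : (0 : ℝ) < εp := hεm_pos.trans_le hεle
  have hc_pos : 0 < c := div_pos hεm_pos hεp0
  have hr_pos : 0 < r := div_pos hεp0 hεm_pos
  have hr1 : 1 ≤ r := (one_le_div hεm_pos).mpr hεle
  have hc1 : c ≤ 1 := (div_le_one hεp0).mpr hεle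
  have hcr : c * r = 1 := by rw [hc, hr]; field_simp
  have hcler : c ≤ r := hc1.trans hr1
  set ρ : ℝ := 1 - c with hρ
  have hρ0 : 0 ≤ ρ := by rw [hρ]; linarith
  have hρ1 : ρ ≤ 1 := by rw [hρ]; linarith
  -- positivity/measurability facts
  have hq0 : ∀ x y, 0 ≤ q x y := fun x y => hεm_pos.le.trans (hq_lb x y)
  have hG0 : ∀ x, 0 ≤ G x := fun x => (hG_pos x).le
  have hQrepr : ∀ (φ : X → ℝ) x, Qop G M φ x = ∫ y, q x y * φ y ∂ν :=
    fun φ x => Qop_repr hG0 hq_meas hq0 hH φ x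
  have hQI : ∀ (m : ℕ) (φ : X → ℝ), Qiter G M m φ = Iit ν q m φ :=
    fun m φ => Qiter_eq_Iit hG0 hq_meas hq0 hH m φ
  -- facts about hs and u = 1/hs
  have hhs_pos : ∀ z, 0 < hs z := fun z => hc_pos.trans_le (hhs_lb z)
  set u : X → ℝ := fun y => (hs y)⁻¹ with hu
  have hu_meas : Measurable u := hhs_meas.inv
  have hu_lb : ∀ y, c ≤ u y := by
    intro y
    show c ≤ (hs y)⁻¹
    rw [inv_eq_one_div, le_div_iff₀ (hhs_pos y)]
    calc c * hs y ≤ c * r := mul_le_mul_of_nonneg_left (hhs_ub y) hc_pos.le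
      _ = 1 := hcr
  have hu_ub : ∀ y, u y ≤ r := by
    intro y
    show (hs y)⁻¹ ≤ r
    rw [inv_eq_one_div, div_le_iff₀ (hhs_pos y)]
    calc (1 : ℝ) = c * r := hcr.symm
      _ = r * c := mul_comm _ _
      _ ≤ r * hs y := mul_le_mul_of_nonneg_left (hhs_lb y) hr_pos.le
  have hsu : ∀ y, hs y * u y = 1 := fun y => mul_inv_cancel₀ (hhs_pos y).ne'
  have hhs_abs : ∀ z, |hs z| ≤ r := fun z => by
    rw [abs_of_nonneg (hhs_pos z).le]; exact hhs_ub z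
  have hs_int : ∀ (m : Measure X) [IsProbabilityMeasure m], Integrable hs m := by
    intro m _
    exact integrable_of_bdd (C := r) m hhs_meas hhs_abs
  -- the eigenvalue identity in integral form
  have hlh : ∀ z, lam * hs z = ∫ y, q z y * hs y ∂ν := fun z => by
    rw [← h_fun_eq z, hQrepr hs z]
  have hlh_pos : ∀ z, 0 < lam * hs z := fun z => mul_pos hlam_pos (hhs_pos z)
  -- ν-mass of hs
  set mν : ℝ := ∫ y, hs y ∂ν with hmν
  have hmν_lb : c ≤ mν := by
    have := integral_mono (integrable_const c) (hs_int ν) (fun y => hhs_lb y)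
    simpa using this
  have hmν_ub : mν ≤ r := by
    have := integral_mono (hs_int ν) (integrable_const r) (fun y => hhs_ub y)
    simpa using this
  have hmν_pos : 0 < mν := hc_pos.trans_le hmν_lb
  -- bounds for lam * hs
  have hlh_lb : ∀ z, εm * mν ≤ lam * hs z := by
    intro z
    rw [hlh z, hmν]
    rw [← integral_const_mul]
    apply integral_mono
    · exact (hs_int ν).const_mul εm
    · apply integrable_of_bdd (C := εp * r) ν ((kernel_meas_right hq_meas z).mul hhs_meas)
      intro y; rw [Pi.mul_apply, abs_mul]
      refine mul_le_mul ?_ (hhs_abs y) (abs_nonneg _) hεp0.le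
      rw [abs_of_nonneg (hq0 z y)]; exact hq_ub z y
    · intro y
      exact mul_le_mul_of_nonneg_right (hq_lb z y) (hhs_pos y).le
  have hlh_ub : ∀ z, lam * hs z ≤ εp * mν := by
    intro z
    rw [hlh z, hmν]
    rw [← integral_const_mul]
    apply integral_mono
    · apply integrable_of_bdd (C := εp * r) ν ((kernel_meas_right hq_meas z).mul hhs_meas)
      intro y; rw [Pi.mul_apply, abs_mul]
      refine mul_le_mul ?_ (hhs_abs y) (abs_nonneg _) hεp0.le
      rw [abs_of_nonneg (hq0 z y)]; exact hq_ub z y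
    · exact (hs_int ν).const_mul εp
    · intro y
      exact mul_le_mul_of_nonneg_right (hq_ub z y) (hhs_pos y).le
  -- the twisted kernel k1
  set k1 : X → X → ℝ := fun z y => q z y * hs y / (lam * hs z) with hk1
  have hk1_meas : Measurable (Function.uncurry k1) := by
    apply Measurable.div
    · exact hq_meas.mul (hhs_meas.comp measurable_snd)
    · exact measurable_const.mul (hhs_meas.comp measurable_fst)
  have hk1_0 : ∀ z y, 0 ≤ k1 z y := fun z y =>
    div_nonneg (mul_nonneg (hq0 z y) (hhs_pos y).le) (hlh_pos z).le
  set Cκ : ℝ := (εp * r) / (εm * mν) with hCκ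
  have hk1_ub : ∀ z y, k1 z y ≤ Cκ := by
    intro z y
    rw [hk1, hCκ]
    apply div_le_div₀ (by positivity)
    · exact mul_le_mul (hq_ub z y) (hhs_ub y) (hhs_pos y).le hεp0.le
    · positivity
    · exact hlh_lb z
  have hk1_mark : ∀ z, ∫ y, k1 z y ∂ν = 1 := by
    intro z
    have : ∫ y, k1 z y ∂ν = (∫ y, q z y * hs y ∂ν) / (lam * hs z) := integral_div _ _
    rw [this, ← hlh z, div_self (hlh_pos z).ne']
  -- the minorizing probability density π
  set π : X → ℝ := fun y => hs y / mν with hπ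
  have hπ_meas : Measurable π := hhs_meas.div_const mν
  have hπ0 : ∀ y, 0 ≤ π y := fun y => div_nonneg (hhs_pos y).le hmν_pos.le
  have hπ1 : ∫ y, π y ∂ν = 1 := by
    rw [hπ]
    rw [integral_div, ← hmν, div_self hmν_pos.ne']
  have hπint : Integrable π ν := (hs_int ν).div_const mν
  have hmin : ∀ z y, c * π y ≤ k1 z y := by
    intro z y
    have h1 : c * π y = (εm * hs y) / (εp * mν) := div_mul_div_comm εm εp (hs y) mν
    rw [h1]
    have h3 : (εm * hs y) / (εp * mν) ≤ (q z y * hs y) / (lam * hs z) := by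
      apply div_le_div₀ (mul_nonneg (hq0 z y) (hhs_pos y).le)
        (mul_le_mul_of_nonneg_right (hq_lb z y) (hhs_pos y).le) (hlh_pos z) (hlh_ub z)
    exact h3
  -- bundled iterate properties for the twisted kernel
  have hIit : ∀ (ψ : X → ℝ), Measurable ψ → (∀ z, c ≤ ψ z) → (∀ z, ψ z ≤ r) → ∀ m : ℕ,
      Measurable (Iit ν k1 m ψ) ∧ (∀ z, c ≤ Iit ν k1 m ψ z ∧ Iit ν k1 m ψ z ≤ r) ∧
        (∀ z z', Iit ν k1 m ψ z - Iit ν k1 m ψ z' ≤ ρ ^ m * (r - c)) := by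
    intro ψ hm ha hb m
    have := Iit_props (ν := ν) hk1_meas hk1_0 hk1_ub hk1_mark hπ0 hπ1 hπint hmin hm ha hb m
    rw [hρ]
    exact this
  -- one-step conjugation identity
  have hQconj : ∀ (ψ : X → ℝ) (z : X),
      Qop G M (fun y => hs y * ψ y) z = lam * hs z * Iop ν k1 ψ z := by
    intro ψ z
    rw [hQrepr]
    have e : (fun y => k1 z y * ψ y) = fun y => (q z y * (hs y * ψ y)) / (lam * hs z) := by
      funext y
      show q z y * hs y / (lam * hs z) * ψ y = _
      field_simp
    have hIe : Iop ν k1 ψ z = (∫ y, q z y * (hs y * ψ y) ∂ν) / (lam * hs z) := by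
      show ∫ y, k1 z y * ψ y ∂ν = _
      rw [e]
      exact integral_div _ _
    rw [hIe, mul_comm (lam * hs z) _, div_mul_cancel₀ _ (hlh_pos z).ne']
  -- the eigen-identity, packaged
  have heig : ∀ (φ : X → ℝ), Measurable φ → ∀ C : ℝ, 0 ≤ C → (∀ z, |φ z| ≤ C) →
      ∫ z, (∫ y, q z y * φ y ∂ν) ∂ηs = lam * ∫ z, φ z ∂ηs :=
    fun φ hφ C hC0 hb => eig_integral hq_meas hq_lb hq_ub hεm_pos.le
      (hkey_of hq_meas hH h_meas_eq) hlam_pos.le hC0 hφ hb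
  -- invariance of the ηs-integral of hs · (Iit m u)
  have hinv : ∀ m : ℕ, ∫ z, hs z * Iit ν k1 m u z ∂ηs = 1 := by
    intro m
    induction m with
    | zero =>
      have e0 : (fun z => hs z * Iit ν k1 0 u z) = fun _ => (1 : ℝ) := funext fun z => hsu z
      rw [e0]
      simp
    | succ m ih =>
      obtain ⟨hm, hbd, _⟩ := hIit u hu_meas hu_lb hu_ub m
      set w := Iit ν k1 m u with hw
      have e1 : ∀ z, hs z * Iit ν k1 (m + 1) u z
          = (∫ y, q z y * (hs y * w y) ∂ν) / lam := by
        intro z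
        have hstep : Iit ν k1 (m + 1) u = Iop ν k1 w := rfl
        have hq1 := hQconj w z
        rw [hQrepr] at hq1
        rw [hstep, eq_div_iff hlam_pos.ne', hq1]
        ring
      rw [integral_congr_ae (ae_of_all _ e1), integral_div]
      have hbw : ∀ z, |hs z * w z| ≤ r * r := by
        intro z
        rw [abs_mul]
        refine mul_le_mul (hhs_abs z) ?_ (abs_nonneg _) hr_pos.le
        rw [abs_of_nonneg (hc_pos.le.trans (hbd z).1)]
        exact (hbd z).2
      rw [heig (fun y => hs y * w y) (hhs_meas.mul hm) (r * r) (by positivity) hbw, ih,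
        mul_one, div_self hlam_pos.ne']
  -- mean-one plus oscillation gives pointwise closeness to 1
  have hmean : ∀ (m : ℕ) (z : X), |Iit ν k1 m u z - 1| ≤ ρ ^ m * (r - c) := by
    intro m z
    obtain ⟨hm, hbd, hosc⟩ := hIit u hu_meas hu_lb hu_ub m
    set w := Iit ν k1 m u with hw
    set Δ : ℝ := ρ ^ m * (r - c) with hΔ
    have hwabs : ∀ z, |w z| ≤ r := fun z => by
      rw [abs_of_nonneg (hc_pos.le.trans (hbd z).1)]; exact (hbd z).2
    have hint1 : Integrable (fun y => hs y * w y) ηs := by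
      apply integrable_of_bdd (C := r * r) ηs (hhs_meas.mul hm)
      intro y; rw [Pi.mul_apply, abs_mul]
      exact mul_le_mul (hhs_abs y) (hwabs y) (abs_nonneg _) hr_pos.le
    have hint2 : Integrable (fun y => hs y * (w z - w y)) ηs := by
      apply integrable_of_bdd (C := r * (r + r)) ηs
        (hhs_meas.mul (measurable_const.sub hm))
      intro y; rw [Pi.mul_apply, abs_mul]
      refine mul_le_mul (hhs_abs y) ?_ (abs_nonneg _) hr_pos.le
      calc |w z - w y| ≤ |w z| + |w y| := abs_sub _ _
        _ ≤ r + r := add_le_add (hwabs z) (hwabs y)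
    have key : w z - 1 = ∫ y, hs y * (w z - w y) ∂ηs := by
      calc w z - 1 = w z * ∫ y, hs y ∂ηs - ∫ y, hs y * w y ∂ηs := by
            rw [h_norm, hinv m]; ring
        _ = (∫ y, w z * hs y ∂ηs) - ∫ y, hs y * w y ∂ηs := by rw [integral_const_mul]
        _ = ∫ y, (w z * hs y - hs y * w y) ∂ηs :=
            (integral_sub ((hs_int ηs).const_mul _) hint1).symm
        _ = ∫ y, hs y * (w z - w y) ∂ηs := by congr 1; funext y; ring
    have hΔint : ∫ y, hs y * Δ ∂ηs = Δ := by
      rw [integral_mul_const, h_norm, one_mul]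
    have up : w z - 1 ≤ Δ := by
      rw [key, ← hΔint]
      apply integral_mono hint2 ((hs_int ηs).mul_const Δ)
      intro y
      exact mul_le_mul_of_nonneg_left (hosc z y) (hhs_pos y).le
    have lo : -Δ ≤ w z - 1 := by
      rw [key]
      have : ∫ y, hs y * (-Δ) ∂ηs = -Δ := by rw [integral_mul_const, h_norm, one_mul]
      rw [← this]
      apply integral_mono ((hs_int ηs).mul_const _) hint2
      intro y
      refine mul_le_mul_of_nonneg_left ?_ (hhs_pos y).le
      have := hosc y z
      linarith
    exact abs_le.mpr ⟨lo, up⟩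
  -- full conjugation identity for Qiter
  have hconj : ∀ (ψ : X → ℝ), Measurable ψ → (∀ z, c ≤ ψ z) → (∀ z, ψ z ≤ r) →
      ∀ m : ℕ, Qiter G M m (fun y => hs y * ψ y)
        = fun z => lam ^ m * (hs z * Iit ν k1 m ψ z) := by
    intro ψ hmψ ha hb m
    induction m with
    | zero =>
      funext z
      show hs z * ψ z = lam ^ 0 * (hs z * ψ z)
      rw [pow_zero, one_mul]
    | succ m ih =>
      obtain ⟨hm, hbd, _⟩ := hIit ψ hmψ ha hb m
      funext z
      show Qop G M (Qiter G M m fun y => hs y * ψ y) z = _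
      rw [ih]
      have hlin : Qop G M (fun z' => lam ^ m * (hs z' * Iit ν k1 m ψ z')) z
          = lam ^ m * Qop G M (fun z' => hs z' * Iit ν k1 m ψ z') z := by
        rw [hQrepr, hQrepr, ← integral_const_mul]
        congr 1; funext y; ring
      rw [hlin, hQconj]
      show _ = lam ^ (m + 1) * (hs z * Iop ν k1 (Iit ν k1 m ψ) z)
      ring
  -- the main objects
  set k : ℕ := n - p with hk
  obtain ⟨hg_meas, hg_bd, hg_osc⟩ := hIit u hu_meas hu_lb hu_ub k
  set g : X → ℝ := Iit ν k1 k u with hg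
  obtain ⟨hTp_meas, hTp_bd, hTp_osc⟩ := hIit u hu_meas hu_lb hu_ub p
  obtain ⟨hTpk_meas, hTpk_bd, hTpk_osc⟩ := hIit u hu_meas hu_lb hu_ub (p + k)
  set A : ℝ := ∫ z, hs z * Iit ν k1 (p + k) u z ∂μ with hA
  set B : ℝ := ∫ z, hs z * Iit ν k1 p u z ∂μ with hB
  set mμ : ℝ := ∫ z, hs z ∂μ with hmμ
  have hmμ_lb : c ≤ mμ := by
    have := integral_mono (integrable_const c) (hs_int μ) (fun y => hhs_lb y)
    simpa using this
  have hmμ_ub : mμ ≤ r := by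
    have := integral_mono (hs_int μ) (integrable_const r) (fun y => hhs_ub y)
    simpa using this
  have hmμ_pos : 0 < mμ := hc_pos.trans_le hmμ_lb
  -- integrals of hs·(Iit m u) over μ are close to mμ
  have hnear : ∀ m : ℕ,
      |(∫ z, hs z * Iit ν k1 m u z ∂μ) - mμ| ≤ mμ * (ρ ^ m * (r - c)) := by
    intro m
    obtain ⟨hm, hbd, _⟩ := hIit u hu_meas hu_lb hu_ub m
    set w := Iit ν k1 m u with hw
    set Δ : ℝ := ρ ^ m * (r - c) with hΔ
    have hwabs : ∀ z, |w z| ≤ r := fun z => by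
      rw [abs_of_nonneg (hc_pos.le.trans (hbd z).1)]; exact (hbd z).2
    have hint1 : Integrable (fun y => hs y * w y) μ := by
      apply integrable_of_bdd (C := r * r) μ (hhs_meas.mul hm)
      intro y; rw [Pi.mul_apply, abs_mul]
      exact mul_le_mul (hhs_abs y) (hwabs y) (abs_nonneg _) hr_pos.le
    have hint2 : Integrable (fun y => hs y * (w y - 1)) μ := by
      apply integrable_of_bdd (C := r * (r + 1)) μ
        (hhs_meas.mul (hm.sub measurable_const))
      intro y; rw [Pi.mul_apply, abs_mul]
      refine mul_le_mul (hhs_abs y) ?_ (abs_nonneg _) hr_pos.le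
      calc |w y - 1| ≤ |w y| + |(1 : ℝ)| := abs_sub _ _
        _ ≤ r + 1 := by rw [abs_one]; exact add_le_add_left (hwabs y) 1
    have e : (∫ z, hs z * w z ∂μ) - mμ = ∫ z, hs z * (w z - 1) ∂μ := by
      rw [hmμ, ← integral_sub hint1 (hs_int μ)]
      congr 1; funext z; ring
    have hΔ0 : 0 ≤ Δ := by
      rw [hΔ]; exact mul_nonneg (pow_nonneg hρ0 m) (by linarith)
    rw [e]
    have hmulint : ∫ z, hs z * Δ ∂μ = mμ * Δ := by rw [integral_mul_const, hmμ]
    have hmulint' : ∫ z, hs z * (-Δ) ∂μ = mμ * (-Δ) := by rw [integral_mul_const, hmμ]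
    refine abs_le.mpr ⟨?_, ?_⟩
    · calc -(mμ * Δ) = mμ * (-Δ) := by ring
        _ = ∫ z, hs z * (-Δ) ∂μ := hmulint'.symm
        _ ≤ ∫ z, hs z * (w z - 1) ∂μ := by
            apply integral_mono ((hs_int μ).mul_const _) hint2
            intro y
            refine mul_le_mul_of_nonneg_left ?_ (hhs_pos y).le
            have := abs_le.mp (hmean m y)
            exact this.1
    · calc ∫ z, hs z * (w z - 1) ∂μ ≤ ∫ z, hs z * Δ ∂μ := by
            apply integral_mono hint2 ((hs_int μ).mul_const _)
            intro y
            refine mul_le_mul_of_nonneg_left ?_ (hhs_pos y).le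
            exact (abs_le.mp (hmean m y)).2
        _ = mμ * Δ := hmulint
  -- lower bounds for A and B
  have hintA : Integrable (fun z => hs z * Iit ν k1 (p + k) u z) μ := by
    apply integrable_of_bdd (C := r * r) μ (hhs_meas.mul hTpk_meas)
    intro y; rw [Pi.mul_apply, abs_mul]
    refine mul_le_mul (hhs_abs y) ?_ (abs_nonneg _) hr_pos.le
    rw [abs_of_nonneg (hc_pos.le.trans (hTpk_bd y).1)]
    exact (hTpk_bd y).2
  have hintB : Integrable (fun z => hs z * Iit ν k1 p u z) μ := by
    apply integrable_of_bdd (C := r * r) μ (hhs_meas.mul hTp_meas)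
    intro y; rw [Pi.mul_apply, abs_mul]
    refine mul_le_mul (hhs_abs y) ?_ (abs_nonneg _) hr_pos.le
    rw [abs_of_nonneg (hc_pos.le.trans (hTp_bd y).1)]
    exact (hTp_bd y).2
  have hA_lb : c * c ≤ A := by
    rw [hA]
    have := integral_mono (integrable_const (c * c)) hintA (fun z =>
      mul_le_mul (hhs_lb z) (hTpk_bd z).1 hc_pos.le (hhs_pos z).le)
    simpa using this
  have hB_lb : c * c ≤ B := by
    rw [hB]
    have := integral_mono (integrable_const (c * c)) hintB (fun z =>
      mul_le_mul (hhs_lb z) (hTp_bd z).1 hc_pos.le (hhs_pos z).le)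
    simpa using this
  have hA_pos : 0 < A := lt_of_lt_of_le (by positivity) hA_lb
  have hB_pos : 0 < B := lt_of_lt_of_le (by positivity) hB_lb
  -- the representation of hpn
  have hone : (fun _ : X => (1 : ℝ)) = fun y => hs y * u y := funext fun y => (hsu y).symm
  have e1 : Qiter G M k (fun _ => (1 : ℝ)) = fun z => lam ^ k * (hs z * g z) :=
    (congrArg (Qiter G M k) hone).trans (hconj u hu_meas hu_lb hu_ub k)
  have e3 : Qiter G M p (fun _ => (1 : ℝ)) = fun z => lam ^ p * (hs z * Iit ν k1 p u z) :=
    (congrArg (Qiter G M p) hone).trans (hconj u hu_meas hu_lb hu_ub p)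
  have lin : Qiter G M p (fun z => lam ^ k * (hs z * g z))
      = fun x => lam ^ k * Qiter G M p (fun z => hs z * g z) x := by
    rw [hQI p, hQI p]
    funext x
    exact Iit_const_mul (ν := ν) (κ := q) (lam ^ k) (fun z => hs z * g z) p x
  have e2 : Qiter G M p (Qiter G M k (fun _ => (1 : ℝ)))
      = fun z => lam ^ k * (lam ^ p * (hs z * Iit ν k1 (p + k) u z)) := by
    rw [e1, lin, hconj g hg_meas (fun z => (hg_bd z).1) (fun z => (hg_bd z).2) p]
    funext x
    rw [hg, ← Iit_add (ν := ν) (κ := k1) p k u]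
  have hetaden : ∫ z, Qiter G M p (fun _ => (1 : ℝ)) z ∂μ = lam ^ p * B := by
    rw [e3, integral_const_mul, ← hB]
  have hetanum : ∫ z, Qiter G M p (Qiter G M k (fun _ => (1 : ℝ))) z ∂μ
      = lam ^ k * (lam ^ p * A) := by
    rw [e2]
    rw [integral_const_mul, integral_const_mul, ← hA]
  have hpn_eq : hpn G M μ p n x0 = hs x0 * g x0 * B / A := by
    simp only [hpn, etaInt]
    rw [← hk, hetanum, hetaden, e1]
    show lam ^ k * (hs x0 * g x0) / (lam ^ k * (lam ^ p * A) / (lam ^ p * B))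
        = hs x0 * g x0 * B / A
    have hlk : lam ^ k ≠ 0 := pow_ne_zero _ hlam_pos.ne'
    have hlp : lam ^ p ≠ 0 := pow_ne_zero _ hlam_pos.ne'
    field_simp
  -- elementary bounds on the iterates of the untwisted kernel
  have hqiter_bd : ∀ m : ℕ, Measurable (Iit ν q m (fun _ => (1 : ℝ))) ∧
      ∀ z, εm ^ m ≤ Iit ν q m (fun _ => (1 : ℝ)) z ∧ Iit ν q m (fun _ => (1 : ℝ)) z ≤ εp ^ m := by
    intro m
    induction m with
    | zero =>
      refine ⟨measurable_const, fun z => ⟨?_, ?_⟩⟩ <;> simp [Iit]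
    | succ m ih =>
      obtain ⟨hm, hbd⟩ := ih
      set w := Iit ν q m (fun _ => (1 : ℝ)) with hw
      have hwabs : ∀ z, |w z| ≤ εp ^ m := fun z => by
        rw [abs_of_nonneg ((pow_nonneg hεm_pos.le m).trans (hbd z).1)]
        exact (hbd z).2
      have hint : ∀ z, Integrable (fun y => q z y * w y) ν := by
        intro z
        apply integrable_of_bdd (C := εp * εp ^ m) ν ((kernel_meas_right hq_meas z).mul hm)
        intro y; rw [Pi.mul_apply, abs_mul]
        refine mul_le_mul ?_ (hwabs y) (abs_nonneg _) hεp0.le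
        rw [abs_of_nonneg (hq0 z y)]; exact hq_ub z y
      refine ⟨Iop_meas hq_meas hm, fun z => ⟨?_, ?_⟩⟩
      · have := integral_mono (integrable_const (εm ^ (m + 1))) (hint z) (fun y => by
          calc εm ^ (m + 1) = εm * εm ^ m := by ring
            _ ≤ q z y * w y :=
              mul_le_mul (hq_lb z y) (hbd y).1 (pow_nonneg hεm_pos.le m) (hq0 z y))
        simp at this; exact this
      · have := integral_mono (hint z) (integrable_const (εp ^ (m + 1))) (fun y => by
          calc q z y * w y ≤ εp * εp ^ m :=
              mul_le_mul (hq_ub z y) (hbd y).2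
                ((pow_nonneg hεm_pos.le m).trans (hbd y).1) hεp0.le
            _ = εp ^ (m + 1) := by ring)
        simp at this; exact this
  -- the crude two-sided bound c ≤ hpn ≤ r
  have hcrude : c ≤ hpn G M μ p n x0 ∧ hpn G M μ p n x0 ≤ r := by
    have hden_pos : 0 < ∫ z, Qiter G M p (fun _ => (1 : ℝ)) z ∂μ := by
      rw [hetaden]
      positivity
    rcases Nat.eq_zero_or_pos k with hk0 | hkpos
    · have hval : hpn G M μ p n x0 = 1 := by
        simp only [hpn, etaInt]
        rw [← hk, hk0]
        show (1 : ℝ) / ((∫ z, Qiter G M p (fun _ => (1 : ℝ)) z ∂μ)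
          / ∫ z, Qiter G M p (fun _ => (1 : ℝ)) z ∂μ) = 1
        rw [div_self hden_pos.ne']
        norm_num
      rw [hval]
      exact ⟨hc1, hr1⟩
    · -- k ≥ 1 : ratio bounds
      set w' := Iit ν q (k - 1) (fun _ => (1 : ℝ)) with hw'
      obtain ⟨hw'_meas, hw'_bd⟩ := hqiter_bd (k - 1)
      set s : ℝ := ∫ y, w' y ∂ν with hs'
      have hw'_abs : ∀ z, |w' z| ≤ εp ^ (k - 1) := fun z => by
        rw [abs_of_nonneg ((pow_nonneg hεm_pos.le _).trans (hw'_bd z).1)]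
        exact (hw'_bd z).2
      have hw'_int : Integrable w' ν := integrable_of_bdd (C := εp ^ (k - 1)) ν hw'_meas hw'_abs
      have hs_lb : εm ^ (k - 1) ≤ s := by
        have := integral_mono (integrable_const (εm ^ (k - 1))) hw'_int (fun z => (hw'_bd z).1)
        simpa [hs'] using this
      have hs_pos : 0 < s := lt_of_lt_of_le (pow_pos hεm_pos _) hs_lb
      have hkk : k = (k - 1) + 1 := (Nat.succ_pred_eq_of_pos hkpos).symm
      set f : X → ℝ := Iit ν q k (fun _ => (1 : ℝ)) with hf
      have hf_bd : ∀ z, εm * s ≤ f z ∧ f z ≤ εp * s := by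
        intro z
        have he : f z = ∫ y, q z y * w' y ∂ν := by
          rw [hf, hkk]
          rfl
        have hint : Integrable (fun y => q z y * w' y) ν := by
          apply integrable_of_bdd (C := εp * εp ^ (k - 1)) ν
            ((kernel_meas_right hq_meas z).mul hw'_meas)
          intro y; rw [Pi.mul_apply, abs_mul]
          refine mul_le_mul ?_ (hw'_abs y) (abs_nonneg _) hεp0.le
          rw [abs_of_nonneg (hq0 z y)]; exact hq_ub z y
        constructor
        · rw [he]
          have := integral_mono (hw'_int.const_mul εm) hint (fun y =>
            mul_le_mul_of_nonneg_right (hq_lb z y)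
              ((pow_nonneg hεm_pos.le _).trans (hw'_bd y).1))
          rwa [integral_const_mul, ← hs'] at this
        · rw [he]
          have := integral_mono hint (hw'_int.const_mul εp) (fun y =>
            mul_le_mul_of_nonneg_right (hq_ub z y)
              ((pow_nonneg hεm_pos.le _).trans (hw'_bd y).1))
          rwa [integral_const_mul, ← hs'] at this
      have hf_meas : Measurable f := (hqiter_bd k).1
      have hf_abs : ∀ z, |f z| ≤ εp * s := fun z => by
        rw [abs_of_nonneg ((mul_pos hεm_pos hs_pos).le.trans (hf_bd z).1)]
        exact (hf_bd z).2
      -- bounds for the normalization etaInt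
      have h1_meas : Measurable (Iit ν q p (fun _ => (1 : ℝ))) := (hqiter_bd p).1
      have h1_bd := (hqiter_bd p).2
      have h1_abs : ∀ z, |Iit ν q p (fun _ => (1 : ℝ)) z| ≤ εp ^ p := fun z => by
        rw [abs_of_nonneg ((pow_nonneg hεm_pos.le p).trans (h1_bd z).1)]
        exact (h1_bd z).2
      have hconst_eq : ∀ (t : ℝ) (x : X),
          Iit ν q p (fun _ => t) x = t * Iit ν q p (fun _ => (1 : ℝ)) x := by
        intro t x
        rw [show (fun _ : X => t) = (fun y : X => t * ((fun _ : X => (1 : ℝ)) y)) from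
          funext fun y => (mul_one t).symm]
        exact Iit_const_mul (ν := ν) (κ := q) t (fun _ => (1 : ℝ)) p x
      have hub : ∀ x, Iit ν q p f x ≤ εp * s * Iit ν q p (fun _ => (1 : ℝ)) x := by
        intro x
        have := Iit_mono (ν := ν) (κ := q) (C := εp * s) hq_meas hq0 hq_ub hεp0.le
          (by positivity) hf_meas hf_abs measurable_const
          (fun z => by rw [abs_of_nonneg (by positivity : (0:ℝ) ≤ εp * s)])
          (fun z => (hf_bd z).2) p x
        rwa [hconst_eq (εp * s) x] at this
      have hlb : ∀ x, εm * s * Iit ν q p (fun _ => (1 : ℝ)) x ≤ Iit ν q p f x := by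
        intro x
        have hms_le : εm * s ≤ εp * s := mul_le_mul_of_nonneg_right hεle hs_pos.le
        have := Iit_mono (ν := ν) (κ := q) (C := εp * s) hq_meas hq0 hq_ub hεp0.le
          (by positivity) measurable_const
          (fun z => by
            rw [abs_of_nonneg (by positivity : (0:ℝ) ≤ εm * s)]; exact hms_le)
          hf_meas hf_abs (fun z => (hf_bd z).1) p x
        rwa [hconst_eq (εm * s) x] at this
      obtain ⟨hIitf_meas, hIitf_abs⟩ := Iit_meas_bdd (ν := ν) (κ := q) (C := εp * s)
        hq_meas hq0 hq_ub hεp0.le (by positivity) hf_meas hf_abs p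
      have hint_num : Integrable (fun z => Iit ν q p f z) μ :=
        integrable_of_bdd (C := εp ^ p * (εp * s)) μ hIitf_meas hIitf_abs
      have hint_den : Integrable (fun z => Iit ν q p (fun _ => (1 : ℝ)) z) μ :=
        integrable_of_bdd (C := εp ^ p) μ h1_meas h1_abs
      set den : ℝ := ∫ z, Iit ν q p (fun _ => (1 : ℝ)) z ∂μ with hden
      set num : ℝ := ∫ z, Iit ν q p f z ∂μ with hnum
      have hden_pos' : 0 < den := by
        rw [hden]
        have := integral_mono (integrable_const (εm ^ p)) hint_den (fun z => (h1_bd z).1)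
        have h2 : (0:ℝ) < εm ^ p := pow_pos hεm_pos p
        simp only [integral_const, measure_univ, ENNReal.toReal_one, probReal_univ, smul_eq_mul,
          one_mul] at this
        linarith
      have hnum_ub : num ≤ εp * s * den := by
        rw [hnum, hden, ← integral_const_mul]
        exact integral_mono hint_num (hint_den.const_mul _) hub
      have hnum_lb : εm * s * den ≤ num := by
        rw [hnum, hden, ← integral_const_mul]
        exact integral_mono (hint_den.const_mul _) hint_num hlb
      -- now the bound for hpn
      have hval : hpn G M μ p n x0 = f x0 / (num / den) := by
        simp only [hpn, etaInt]
        rw [← hk]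
        have q1 : Qiter G M k (fun _ : X => (1 : ℝ)) = f := by rw [hQI k, hf]
        have q2 : ∫ z, Qiter G M p (Qiter G M k (fun _ : X => (1 : ℝ))) z ∂μ = num := by
          rw [q1, hQI p, ← hnum]
        have q3 : ∫ z, Qiter G M p (fun _ : X => (1 : ℝ)) z ∂μ = den := by
          rw [hQI p, ← hden]
        rw [q2, q3, q1]
      have hE_lb : εm * s ≤ num / den := (le_div_iff₀ hden_pos').mpr hnum_lb
      have hE_ub : num / den ≤ εp * s := (div_le_iff₀ hden_pos').mpr (by
        rw [mul_comm (εp * s) den] at hnum_ub ⊢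
        exact hnum_ub)
      have hE_pos : 0 < num / den := lt_of_lt_of_le (by positivity) hE_lb
      rw [hval]
      constructor
      · have h4 : (εm * s) / (εp * s) ≤ f x0 / (num / den) :=
          div_le_div₀ ((mul_pos hεm_pos hs_pos).le.trans (hf_bd x0).1) (hf_bd x0).1
            hE_pos hE_ub
        calc c = (εm * s) / (εp * s) := by
              rw [mul_div_mul_right _ _ hs_pos.ne', hc]
          _ ≤ _ := h4
      · have h4 : f x0 / (num / den) ≤ (εp * s) / (εm * s) :=
          div_le_div₀ (by positivity) (hf_bd x0).2 (by positivity) hE_lb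
        calc f x0 / (num / den) ≤ (εp * s) / (εm * s) := h4
          _ = r := by rw [mul_div_mul_right _ _ hs_pos.ne', hr]
  -- final assembly
  have hCh0 : 0 ≤ 2 * r ^ 2 * (1 + r + 2 * r ^ 3) := by positivity
  set mn := min k p with hmn
  have hmn_k : mn ≤ k := min_le_left _ _
  have hmn_p : mn ≤ p := min_le_right _ _
  have hmn_pk : mn ≤ p + k := hmn_p.trans (Nat.le_add_right _ _)
  have hpowk : ρ ^ k ≤ ρ ^ mn := pow_le_pow_of_le_one hρ0 hρ1 hmn_k
  have hpowp : ρ ^ p ≤ ρ ^ mn := pow_le_pow_of_le_one hρ0 hρ1 hmn_p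
  have hpowpk : ρ ^ (p + k) ≤ ρ ^ mn := pow_le_pow_of_le_one hρ0 hρ1 hmn_pk
  have hρmn0 : 0 ≤ ρ ^ mn := pow_nonneg hρ0 _
  by_cases hcase : ρ ^ mn ≤ 1 / (2 * r ^ 2)
  · -- contraction case
    set D : ℝ := ρ ^ mn * (r - c) with hD
    have hrc0 : (0 : ℝ) ≤ r - c := by linarith
    have hD0 : 0 ≤ D := mul_nonneg hρmn0 hrc0
    have hDle : D ≤ 1 / (2 * r) := by
      rw [hD]
      calc ρ ^ mn * (r - c) ≤ (1 / (2 * r ^ 2)) * r :=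
            mul_le_mul hcase (by linarith only [hc_pos]) hrc0 (by positivity)
        _ = 1 / (2 * r) := by field_simp
    have hDle2 : D ≤ 1 / 2 :=
      hDle.trans (one_div_le_one_div_of_le (by norm_num) (by linarith only [hr1]))
    have hgd : |g x0 - 1| ≤ D := by
      rw [hg]
      calc |Iit ν k1 k u x0 - 1| ≤ ρ ^ k * (r - c) := hmean k x0
        _ ≤ D := by rw [hD]; exact mul_le_mul_of_nonneg_right hpowk hrc0
    have hBd : |B - mμ| ≤ mμ * D := by
      calc |B - mμ| ≤ mμ * (ρ ^ p * (r - c)) := hnear p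
        _ ≤ mμ * D := by
            rw [hD]
            exact mul_le_mul_of_nonneg_left
              (mul_le_mul_of_nonneg_right hpowp hrc0) hmμ_pos.le
    have hAd : |A - mμ| ≤ mμ * D := by
      calc |A - mμ| ≤ mμ * (ρ ^ (p + k) * (r - c)) := hnear (p + k)
        _ ≤ mμ * D := by
            rw [hD]
            exact mul_le_mul_of_nonneg_left
              (mul_le_mul_of_nonneg_right hpowpk hrc0) hmμ_pos.le
    have hmD : mμ * D ≤ mμ * (1 / 2) := mul_le_mul_of_nonneg_left hDle2 hmμ_pos.le
    have hA_lb2 : mμ * (1 / 2) ≤ A := by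
      have h1 := (abs_le.mp hAd).1
      linarith only [h1, hmD]
    have hB_ub2 : B ≤ mμ * (3 / 2) := by
      have h1 := (abs_le.mp hBd).2
      linarith only [h1, hmD]
    have hkey : |g x0 * B - A| ≤ mμ * ((7 / 2) * D) := by
      have e : g x0 * B - A = (g x0 - 1) * B + ((B - mμ) + (mμ - A)) := by ring
      have h1 : |(g x0 - 1) * B| ≤ D * (mμ * (3 / 2)) := by
        rw [abs_mul, abs_of_pos hB_pos]
        exact mul_le_mul hgd hB_ub2 hB_pos.le hD0
      have h2 : |mμ - A| = |A - mμ| := abs_sub_comm _ _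
      calc |g x0 * B - A| = |(g x0 - 1) * B + ((B - mμ) + (mμ - A))| := by rw [e]
        _ ≤ |(g x0 - 1) * B| + |(B - mμ) + (mμ - A)| := abs_add_le _ _
        _ ≤ |(g x0 - 1) * B| + (|B - mμ| + |mμ - A|) := by
            linarith only [abs_add_le (B - mμ) (mμ - A)]
        _ ≤ D * (mμ * (3 / 2)) + (mμ * D + mμ * D) := by
            rw [h2]
            linarith only [h1, hAd, hBd]
        _ = mμ * ((7 / 2) * D) := by ring
    have hstep : |hpn G M μ p n x0 - hs x0| ≤ (r * (mμ * ((7 / 2) * D))) / (mμ * (1 / 2)) := by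
      rw [hpn_eq]
      have e : hs x0 * g x0 * B / A - hs x0 = hs x0 * (g x0 * B - A) / A := by
        field_simp
      rw [e, abs_div, abs_of_pos hA_pos, abs_mul, abs_of_pos (hhs_pos x0)]
      apply div_le_div₀ (by positivity) ?_ (by positivity) hA_lb2
      exact mul_le_mul (hhs_ub x0) hkey (abs_nonneg _) (by linarith only [hr_pos])
    have heq : (r * (mμ * ((7 / 2) * D))) / (mμ * (1 / 2)) = 7 * r * D := by
      field_simp
    rw [heq] at hstep
    calc |hpn G M μ p n x0 - hs x0| ≤ 7 * r * D := hstep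
      _ = ρ ^ mn * (7 * r * (r - c)) := by rw [hD]; ring
      _ ≤ ρ ^ mn * (2 * r ^ 2 * (1 + r + 2 * r ^ 3)) := by
          apply mul_le_mul_of_nonneg_left ?_ hρmn0
          have p3 : r ^ 2 ≤ r ^ 3 := pow_le_pow_right₀ hr1 (by norm_num)
          have p5 : r ^ 2 ≤ r ^ 5 := pow_le_pow_right₀ hr1 (by norm_num)
          have e1 : 7 * r * (r - c) ≤ 7 * (r * r) := by
            have h6 := mul_le_mul_of_nonneg_left
              (show r - c ≤ r by linarith only [hc_pos]) (by positivity : (0:ℝ) ≤ 7 * r)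
            linarith only [h6]
          have e2 : r * r = r ^ 2 := by ring
          have e3 : 2 * r ^ 2 * (1 + r + 2 * r ^ 3) = 2 * r ^ 2 + 2 * r ^ 3 + 4 * r ^ 5 := by
            ring
          have p2 : (0:ℝ) ≤ r ^ 2 := by positivity
          linarith only [e1, e2, e3, p3, p5, p2]
  · -- crude case
    have h2 : 1 / (2 * r ^ 2) ≤ ρ ^ mn := (not_le.mp hcase).le
    have hcrude_abs : |hpn G M μ p n x0 - hs x0| ≤ r - c :=
      abs_le.mpr ⟨by linarith only [hcrude.1, hhs_ub x0],
        by linarith only [hcrude.2, hhs_lb x0]⟩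
    have h3 : (1 / (2 * r ^ 2)) * (2 * r ^ 2 * (1 + r + 2 * r ^ 3))
        = 1 + r + 2 * r ^ 3 := by
      field_simp
    have h4 : (1 / (2 * r ^ 2)) * (2 * r ^ 2 * (1 + r + 2 * r ^ 3))
        ≤ ρ ^ mn * (2 * r ^ 2 * (1 + r + 2 * r ^ 3)) :=
      mul_le_mul_of_nonneg_right h2 hCh0
    have h5 : (0:ℝ) ≤ 2 * r ^ 3 := by positivity
    calc |hpn G M μ p n x0 - hs x0| ≤ r - c := hcrude_abs
      _ ≤ ρ ^ mn * (2 * r ^ 2 * (1 + r + 2 * r ^ 3)) := by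
          linarith only [h3, h4, hc_pos, h5]
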